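/- Let m ∈ ℕ and let x = (x_0,…,x_m) ∈ ℕ^{m+1} satisfy x_i ≤ x_{i+1} for 0 ≤ i ≤ m−1 and x_i < x_{i+2} for 0 ≤ i ≤ m−2. Define 𝔖(x) as the set of indices i ∈ [0,m] with x_{i−1} < x_i < x_{i+1}, using the conventions x_{−1} = −∞ and x_{m+1} = +∞. Then |𝔖(x)| ≡ m − 1 (mod 2). -/
import Mathlib


open Finset

/-- `X_m`: sequences `(x_0,…,x_m)` in `ℕ` with `x i ≤ x (i+1)` and `x i < x (i+2)`. -/
def IsX (m : ℕ) (x : ℕ → ℕ) : Prop :=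
  (∀ i, i < m → x i ≤ x (i + 1)) ∧ (∀ i, i + 2 ≤ m → x i < x (i + 2))

/-- `Y_m`: sequences with `y i ≤ y (i+1)` and `y i + 2 ≤ y (i+2)`. -/
def IsY (m : ℕ) (y : ℕ → ℕ) : Prop :=
  (∀ i, i < m → y i ≤ y (i + 1)) ∧ (∀ i, i + 2 ≤ m → y i + 2 ≤ y (i + 2))

/-- `ℰ_m`: weakly increasing sequences. -/
def IsE (m : ℕ) (e : ℕ → ℕ) : Prop := ∀ i, i < m → e i ≤ e (i + 1)

/-- `𝔖(x)`: indices `i ∈ [0,m]` with `x (i-1) < x i < x (i+1)`,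
with conventions `x_{-1} = -∞`, `x_{m+1} = +∞`. -/
def SS (m : ℕ) (x : ℕ → ℕ) : Finset ℕ :=
  (Finset.range (m + 1)).filter
    (fun i => (i = 0 ∨ x (i - 1) < x i) ∧ (i = m ∨ x i < x (i + 1)))

/-- `𝔉(y)`: intervals `[i,j] ⊆ [0,m]` with
`y_{i-1}-(i-1) < y_i-i = ⋯ = y_j-j < y_{j+1}-(j+1)` (conventions `±∞` at the ends),
encoded as pairs `(i, j)`. -/
def FF (m : ℕ) (y : ℕ → ℕ) : Finset (ℕ × ℕ) :=
  ((Finset.range (m + 1)) ×ˢ (Finset.range (m + 1))).filter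
    (fun p => p.1 ≤ p.2 ∧
      (p.1 = 0 ∨ ((y (p.1 - 1) : ℤ) - ((p.1 : ℤ) - 1) < (y p.1 : ℤ) - (p.1 : ℤ))) ∧
      (p.2 = m ∨ ((y p.2 : ℤ) - (p.2 : ℤ) < (y (p.2 + 1) : ℤ) - ((p.2 : ℤ) + 1))) ∧
      (∀ k ∈ Finset.Ico p.1 p.2, ((y k : ℤ) - (k : ℤ) = (y (k + 1) : ℤ) - ((k : ℤ) + 1))))

/-- `𝔉'(y)`: the intervals in `𝔉(y)` of odd cardinality. -/
def FF' (m : ℕ) (y : ℕ → ℕ) : Finset (ℕ × ℕ) :=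
  (FF m y).filter (fun p => Odd (p.2 - p.1 + 1))

/-- `R(y)`: endpoints of intervals in `𝔉(y)`. -/
def RR (m : ℕ) (y : ℕ → ℕ) : Finset ℕ :=
  (Finset.range (m + 1)).filter (fun k => ∃ p ∈ FF m y, k = p.1 ∨ k = p.2)

/-- `R_0(y)`: those `k` with `[k,k] ∈ 𝔉(y)`. -/
def RR0 (m : ℕ) (y : ℕ → ℕ) : Finset ℕ :=
  (Finset.range (m + 1)).filter (fun k => (k, k) ∈ FF m y)

/-- `S(y)`: pairs `(x, x') ∈ X_m × X_m` with `x + x' = y`,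
`𝔖(x) ∪ 𝔖(x') = R(y)`, `𝔖(x) ∩ 𝔖(x') = R_0(y)`, and `𝔖(x') = ∅` if `𝔉'(y) = ∅`. -/
def IsS (m : ℕ) (y x x' : ℕ → ℕ) : Prop :=
  IsX m x ∧ IsX m x' ∧ (∀ i, i ≤ m → x i + x' i = y i) ∧
  SS m x ∪ SS m x' = RR m y ∧ SS m x ∩ SS m x' = RR0 m y ∧
  (FF' m y = ∅ → SS m x' = ∅)


lemma mem_SS_iff (m : ℕ) (x : ℕ → ℕ) (i : ℕ) :
    i ∈ SS m x ↔ i ≤ m ∧ (i = 0 ∨ x (i - 1) < x i) ∧ (i = m ∨ x i < x (i + 1)) := by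
  simp [SS, Finset.mem_filter, Finset.mem_range, Nat.lt_succ_iff]

theorem stmt0 (m : ℕ) (x : ℕ → ℕ) (hx : IsX m x) :
    ((SS m x).card : ℤ) ≡ (m : ℤ) - 1 [ZMOD 2] := by
  induction m with
  | zero =>
      have h0 : SS 0 x = {0} := by
        ext i
        simp [mem_SS_iff]
        omega
      rw [h0]
      decide
  | succ m ih =>
      have hx' : IsX m x := ⟨fun i hi => hx.1 i (by omega), fun i hi => hx.2 i (by omega)⟩
      have ih' := ih hx'
      rcases lt_or_eq_of_le (hx.1 m (by omega)) with hlt | heq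
      · -- x m < x (m+1) : SS grows by one element m+1
        have hset : SS (m + 1) x = insert (m + 1) (SS m x) := by
          ext i
          simp only [mem_SS_iff, Finset.mem_insert]
          constructor
          · rintro ⟨hi, h1, h2⟩
            by_cases h : i = m + 1
            · exact Or.inl h
            · refine Or.inr ⟨by omega, h1, ?_⟩
              rcases h2 with h2 | h2
              · omega
              · exact Or.inr h2
          · rintro (rfl | ⟨hi, h1, h2⟩)
            · refine ⟨le_refl _, Or.inr ?_, Or.inl rfl⟩
              simpa using hlt
            · refine ⟨by omega, h1, ?_⟩
              rcases h2 with rfl | h2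
              · exact Or.inr hlt
              · exact Or.inr h2
        have hnm : (m + 1) ∉ SS m x := by
          simp [mem_SS_iff]
        rw [hset, Finset.card_insert_of_notMem hnm]
        rw [Int.ModEq] at ih' ⊢
        push_cast
        omega
      · -- x m = x (m+1) : SS loses the element m
        have hmem : m ∈ SS m x := by
          rw [mem_SS_iff]
          refine ⟨le_refl _, ?_, Or.inl rfl⟩
          rcases Nat.eq_zero_or_pos m with rfl | hm
          · exact Or.inl rfl
          · refine Or.inr ?_
            have := hx.2 (m - 1) (by omega)
            have e : m - 1 + 2 = m + 1 := by omega
            rw [e] at this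
            omega
        have hset : SS (m + 1) x = (SS m x).erase m := by
          ext i
          simp only [mem_SS_iff, Finset.mem_erase]
          constructor
          · rintro ⟨hi, h1, h2⟩
            have hne1 : i ≠ m + 1 := by
              rintro rfl
              rcases h1 with h1 | h1
              · omega
              · simp at h1; omega
            have hR : x i < x (i + 1) := by
              rcases h2 with h2 | h2
              · omega
              · exact h2
            have hne : i ≠ m := by
              rintro rfl
              omega
            exact ⟨hne, by omega, h1, Or.inr hR⟩
          · rintro ⟨hne, hi, h1, h2⟩
            refine ⟨by omega, h1, ?_⟩
            rcases h2 with h2 | h2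
            · omega
            · exact Or.inr h2
        have hc : 1 ≤ (SS m x).card := Finset.card_pos.mpr ⟨m, hmem⟩
        rw [hset, Finset.card_erase_of_mem hmem]
        rw [Int.ModEq] at ih' ⊢
        push_cast [hc]
        omega
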